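/- If sign(S) = sign(S̃) and there exists a vector v ∈ S⊥ with all components positive, then for every c > 0 the map F_c is a bijection from ℝ^d onto C°. -/

import Mathlib

open scoped BigOperators

noncomputable section

/-- The generalized exponential map `F_c(x) = ∑ i, c_i exp(w̃^i · x) w^i`. -/
def Fmap {d dt n : ℕ} (W : Matrix (Fin d) (Fin n) ℝ) (Wt : Matrix (Fin dt) (Fin n) ℝ)
    (c : Fin n → ℝ) (x : Fin dt → ℝ) : Fin d → ℝ :=
  fun i => ∑ j, c j * Real.exp (∑ k, Wt k j * x k) * W i j

/-- The polyhedral cone generated by the columns of `W`. -/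
def coneOf {d n : ℕ} (W : Matrix (Fin d) (Fin n) ℝ) : Set (Fin d → ℝ) :=
  {y | ∃ u : Fin n → ℝ, (∀ j, 0 ≤ u j) ∧ y = fun i => ∑ j, u j * W i j}

/-- The componentwise sign vector. -/
def signVec {n : ℕ} (x : Fin n → ℝ) : Fin n → SignType := fun i => SignType.sign (x i)

/-- The set of sign vectors of a set of real vectors. -/
def signSet {n : ℕ} (T : Set (Fin n → ℝ)) : Set (Fin n → SignType) := signVec '' T

/-- The kernel of (the linear map given by) a matrix, as a set. -/
def kerSet {d n : ℕ} (W : Matrix (Fin d) (Fin n) ℝ) : Set (Fin n → ℝ) :=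
  {x | W.mulVec x = 0}

/-- The orthogonal complement (w.r.t. the standard inner product) of a set in `ℝ^n`. -/
def orthSet {n : ℕ} (T : Set (Fin n → ℝ)) : Set (Fin n → ℝ) :=
  {v | ∀ u ∈ T, ∑ i, u i * v i = 0}

/-! ### Auxiliary lemmas -/

open Matrix

section Aux

variable {d n : ℕ}

lemma surj_of_rank (W : Matrix (Fin d) (Fin n) ℝ) (hW : W.rank = d) :
    Function.Surjective W.mulVecLin := by
  rw [← LinearMap.range_eq_top]
  apply Submodule.eq_top_of_finrank_eq
  rw [← Matrix.rank, hW]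
  simp [Module.finrank_pi]

lemma rows_indep (Wt : Matrix (Fin d) (Fin n) ℝ) (hWt : Wt.rank = d)
    (z : Fin d → ℝ) (hz : ∀ j, ∑ k, Wt k j * z k = 0) : z = 0 := by
  have hrank : (Wtᵀ).rank = d := by rw [Matrix.rank_transpose]; exact hWt
  have hker : LinearMap.ker (Wtᵀ.mulVecLin) = ⊥ := by
    have h1 := LinearMap.finrank_range_add_finrank_ker (Wtᵀ.mulVecLin)
    rw [← Matrix.rank, hrank] at h1
    simp only [Module.finrank_pi, Fintype.card_fin] at h1
    exact Submodule.finrank_eq_zero.mp (by omega)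
  have hz0 : Wtᵀ.mulVecLin z = 0 := by
    ext j
    simp only [Matrix.mulVecLin_apply, Matrix.mulVec_transpose, Pi.zero_apply]
    rw [show (z ᵥ* Wt) j = ∑ k, Wt k j * z k by simp [Matrix.vecMul, dotProduct, mul_comm]]
    exact hz j
  have hinj := LinearMap.ker_eq_bot.mp hker
  have := hinj (a₂ := 0) (by simpa using hz0)
  simpa using this

lemma dot_ker_row (W : Matrix (Fin d) (Fin n) ℝ) (u : Fin n → ℝ)
    (hu : W.mulVec u = 0) (l : Fin d → ℝ) :
    ∑ j, u j * (Wᵀ.mulVec l) j = 0 := by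
  have h1 : ∀ j, u j * (Wᵀ.mulVec l) j = ∑ k, (W k j * u j) * l k := by
    intro j
    simp only [Matrix.mulVec, dotProduct, Matrix.transpose_apply, Finset.mul_sum]
    exact Finset.sum_congr rfl fun k _ => by ring
  rw [Finset.sum_congr rfl fun j _ => h1 j, Finset.sum_comm]
  have h2 : ∀ k, ∑ j, (W k j * u j) * l k = (W.mulVec u) k * l k := by
    intro k; simp [Matrix.mulVec, dotProduct, Finset.sum_mul]
  rw [Finset.sum_congr rfl fun k _ => h2 k, hu]
  simp

lemma v_in_rowspace (W : Matrix (Fin d) (Fin n) ℝ) (hW : W.rank = d)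
    (v : Fin n → ℝ) (hv : ∀ u : Fin n → ℝ, W.mulVec u = 0 → ∑ i, u i * v i = 0) :
    ∃ l : Fin d → ℝ, v = Wᵀ.mulVec l := by
  have hdisj : LinearMap.ker W.mulVecLin ⊓ LinearMap.range (Wᵀ.mulVecLin) = ⊥ := by
    rw [Submodule.eq_bot_iff]
    rintro u ⟨huK, l, rfl⟩
    have h0 : W.mulVec (Wᵀ.mulVecLin l) = 0 := huK
    have hsum : ∑ j, (Wᵀ.mulVecLin l) j * (Wᵀ.mulVecLin l) j = 0 := by
      have := dot_ker_row W (Wᵀ.mulVecLin l) h0 l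
      simp only [Matrix.mulVecLin_apply] at this ⊢; exact this
    funext j
    have hnn : ∀ j ∈ Finset.univ, (0:ℝ) ≤ (Wᵀ.mulVecLin l) j * (Wᵀ.mulVecLin l) j :=
      fun j _ => mul_self_nonneg _
    have := (Finset.sum_eq_zero_iff_of_nonneg hnn).mp hsum j (Finset.mem_univ j)
    simpa using mul_self_eq_zero.mp this
  have hfR : Module.finrank ℝ (LinearMap.range (Wᵀ.mulVecLin)) = d := by
    rw [← Matrix.rank, Matrix.rank_transpose, hW]
  have h1 := LinearMap.finrank_range_add_finrank_ker (W.mulVecLin)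
  rw [← Matrix.rank, hW] at h1
  simp only [Module.finrank_pi, Fintype.card_fin] at h1
  have hsup : LinearMap.ker W.mulVecLin ⊔ LinearMap.range (Wᵀ.mulVecLin) = ⊤ := by
    apply Submodule.eq_top_of_finrank_eq
    have h2 := Submodule.finrank_sup_add_finrank_inf_eq
      (LinearMap.ker W.mulVecLin) (LinearMap.range (Wᵀ.mulVecLin))
    rw [hdisj, finrank_bot ℝ (Fin n → ℝ), hfR] at h2
    simp only [Module.finrank_pi, Fintype.card_fin]
    omega
  have hvmem : v ∈ LinearMap.ker W.mulVecLin ⊔ LinearMap.range (Wᵀ.mulVecLin) := by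
    rw [hsup]; trivial
  obtain ⟨s, hs, r, hr, hsr⟩ := Submodule.mem_sup.mp hvmem
  obtain ⟨l, rfl⟩ := hr
  have hsker : W.mulVec s = 0 := hs
  have hs0 : s = 0 := by
    have ha : ∑ i, s i * v i = 0 := hv s hsker
    have hb : ∑ i, s i * (Wᵀ.mulVecLin l) i = 0 := by
      have := dot_ker_row W s hsker l
      simp only [Matrix.mulVecLin_apply] at this ⊢; exact this
    have h3 : ∑ i, s i * s i = 0 := by
      have hc : ∀ i, s i * s i = s i * v i - s i * (Wᵀ.mulVecLin l) i := by
        intro i; rw [← hsr]; simp only [Pi.add_apply]; ring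
      rw [Finset.sum_congr rfl fun i _ => hc i, Finset.sum_sub_distrib, ha, hb, sub_zero]
    funext i
    have hnn : ∀ i ∈ Finset.univ, (0:ℝ) ≤ s i * s i := fun i _ => mul_self_nonneg _
    have := (Finset.sum_eq_zero_iff_of_nonneg hnn).mp h3 i (Finset.mem_univ i)
    simpa using mul_self_eq_zero.mp this
  exact ⟨l, by rw [← hsr, hs0, zero_add]; rfl⟩

lemma sign_dot_zero (u w : Fin n → ℝ)
    (hs : ∀ j, SignType.sign (u j) = SignType.sign (w j))
    (hd : ∑ j, u j * w j = 0) : w = 0 := by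
  have hnn : ∀ j ∈ Finset.univ, (0:ℝ) ≤ u j * w j := by
    intro j _
    rcases lt_trichotomy (w j) 0 with h | h | h
    · have : SignType.sign (u j) = -1 := by rw [hs j]; exact sign_neg h
      have hu : u j < 0 := sign_eq_neg_one_iff.mp this
      exact le_of_lt (mul_pos_of_neg_of_neg hu h)
    · simp [h]
    · have : SignType.sign (u j) = 1 := by rw [hs j]; exact sign_pos h
      have hu : 0 < u j := sign_eq_one_iff.mp this
      exact le_of_lt (mul_pos hu h)
  funext j
  have h0 := (Finset.sum_eq_zero_iff_of_nonneg hnn).mp hd j (Finset.mem_univ j)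
  by_contra hw
  rcases lt_trichotomy (w j) 0 with h | h | h
  · have : SignType.sign (u j) = -1 := by rw [hs j]; exact sign_neg h
    have hu : u j < 0 := sign_eq_neg_one_iff.mp this
    nlinarith
  · exact hw h
  · have : SignType.sign (u j) = 1 := by rw [hs j]; exact sign_pos h
    have hu : 0 < u j := sign_eq_one_iff.mp this
    nlinarith

lemma dot_kerWt_rowWt (Wt : Matrix (Fin d) (Fin n) ℝ) (u' : Fin n → ℝ)
    (hu' : Wt.mulVec u' = 0) (z : Fin d → ℝ) :
    ∑ j, u' j * (∑ k, Wt k j * z k) = 0 := by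
  have h1 : ∀ j, u' j * (∑ k, Wt k j * z k) = ∑ k, (Wt k j * u' j) * z k := by
    intro j; rw [Finset.mul_sum]; exact Finset.sum_congr rfl fun k _ => by ring
  rw [Finset.sum_congr rfl fun j _ => h1 j, Finset.sum_comm]
  have h2 : ∀ k, ∑ j, (Wt k j * u' j) * z k = (Wt.mulVec u') k * z k := by
    intro k; simp [Matrix.mulVec, dotProduct, Finset.sum_mul]
  rw [Finset.sum_congr rfl fun k _ => h2 k, hu']
  simp

lemma key_sign (W Wt : Matrix (Fin d) (Fin n) ℝ)
    (hsign : signSet (kerSet W) = signSet (kerSet Wt))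
    (u : Fin n → ℝ) (hu : W.mulVec u = 0) (z : Fin d → ℝ)
    (hs : ∀ j, SignType.sign (u j) = SignType.sign (∑ k, Wt k j * z k)) :
    ∀ j, (∑ k, Wt k j * z k) = 0 := by
  have hmem : signVec u ∈ signSet (kerSet W) := ⟨u, hu, rfl⟩
  rw [hsign] at hmem
  obtain ⟨u', hu', hsu⟩ := hmem
  have hs' : ∀ j, SignType.sign (u' j) = SignType.sign (∑ k, Wt k j * z k) := by
    intro j
    have : SignType.sign (u' j) = SignType.sign (u j) := congrFun hsu j
    rw [this]; exact hs j
  have hdot := dot_kerWt_rowWt Wt u' hu' z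
  have := sign_dot_zero u' (fun j => ∑ k, Wt k j * z k) hs' hdot
  exact fun j => congrFun this j

lemma sign_exp_sub (a b : ℝ) :
    SignType.sign (Real.exp a - Real.exp b) = SignType.sign (a - b) := by
  rcases lt_trichotomy a b with h | h | h
  · rw [sign_neg (by simp [Real.exp_lt_exp.mpr h]), sign_neg (by linarith)]
  · simp [h]
  · rw [sign_pos (by simp [Real.exp_lt_exp.mpr h]), sign_pos (by linarith)]

lemma sign_pos_mul (c x : ℝ) (hc : 0 < c) :
    SignType.sign (c * x) = SignType.sign x := by
  rcases lt_trichotomy x 0 with h | h | h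
  · rw [sign_neg (mul_neg_of_pos_of_neg hc h), sign_neg h]
  · simp [h]
  · rw [sign_pos (mul_pos hc h), sign_pos h]

lemma Fmap_sub_ker (W Wt : Matrix (Fin d) (Fin n) ℝ) (c : Fin n → ℝ)
    (x y : Fin d → ℝ) (hxy : Fmap W Wt c x = Fmap W Wt c y) :
    W.mulVec (fun j => c j * (Real.exp (∑ k, Wt k j * x k)
      - Real.exp (∑ k, Wt k j * y k))) = 0 := by
  funext i
  have h1 : (W.mulVec fun j => c j * (Real.exp (∑ k, Wt k j * x k)
      - Real.exp (∑ k, Wt k j * y k))) i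
      = Fmap W Wt c x i - Fmap W Wt c y i := by
    simp only [Matrix.mulVec, dotProduct, Fmap, ← Finset.sum_sub_distrib]
    exact Finset.sum_congr rfl fun j _ => by ring
  rw [h1, hxy]
  simp

lemma Fmap_injective (W Wt : Matrix (Fin d) (Fin n) ℝ) (hWt : Wt.rank = d)
    (hsign : signSet (kerSet W) = signSet (kerSet Wt))
    (c : Fin n → ℝ) (hc : ∀ j, 0 < c j) :
    Function.Injective (Fmap W Wt c) := by
  intro x y hxy
  set u : Fin n → ℝ := fun j =>
    c j * (Real.exp (∑ k, Wt k j * x k) - Real.exp (∑ k, Wt k j * y k)) with hu_def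
  have hu : W.mulVec u = 0 := Fmap_sub_ker W Wt c x y hxy
  have hs : ∀ j, SignType.sign (u j) = SignType.sign (∑ k, Wt k j * (x - y) k) := by
    intro j
    rw [hu_def]
    have h1 : SignType.sign (c j * (Real.exp (∑ k, Wt k j * x k)
        - Real.exp (∑ k, Wt k j * y k)))
        = SignType.sign (Real.exp (∑ k, Wt k j * x k) - Real.exp (∑ k, Wt k j * y k)) :=
      sign_pos_mul _ _ (hc j)
    rw [h1, sign_exp_sub]
    congr 1
    rw [← Finset.sum_sub_distrib]
    exact Finset.sum_congr rfl fun k _ => by simp [Pi.sub_apply]; ring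
  have hz := key_sign W Wt hsign u hu (x - y) hs
  have := rows_indep Wt hWt (x - y) hz
  exact sub_eq_zero.mp this

end Aux

/-! ### Derivative and openness -/

section Deriv

variable {d n : ℕ}

def Amap (W : Matrix (Fin d) (Fin n) ℝ) : (Fin n → ℝ) →L[ℝ] (Fin d → ℝ) :=
  (W.mulVecLin).toContinuousLinearMap

def Bmap (Wt : Matrix (Fin d) (Fin n) ℝ) : (Fin d → ℝ) →L[ℝ] (Fin n → ℝ) :=
  (Wtᵀ.mulVecLin).toContinuousLinearMap

def gmap (c : Fin n → ℝ) : (Fin n → ℝ) → (Fin n → ℝ) := fun ξ j => c j * Real.exp (ξ j)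

def Dg (c : Fin n → ℝ) (ξ : Fin n → ℝ) : (Fin n → ℝ) →L[ℝ] (Fin n → ℝ) :=
  ContinuousLinearMap.pi fun j => (c j * Real.exp (ξ j)) • ContinuousLinearMap.proj j

lemma Fmap_eq (W Wt : Matrix (Fin d) (Fin n) ℝ) (c : Fin n → ℝ) :
    Fmap W Wt c = fun x => Amap W ((gmap c) ((Bmap Wt) x)) := by
  funext x i
  simp only [Fmap, Amap, Bmap, gmap, LinearMap.coe_toContinuousLinearMap',
    Matrix.mulVecLin_apply, Matrix.mulVec, dotProduct, Matrix.transpose_apply]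
  exact Finset.sum_congr rfl fun j _ => by ring

lemma hasFDerivAt_gmap (c : Fin n → ℝ) (ξ : Fin n → ℝ) :
    HasFDerivAt (gmap c) (Dg c ξ) ξ := by
  apply hasFDerivAt_pi.2
  intro j
  have h1 := hasFDerivAt_apply (𝕜 := ℝ) (F' := fun _ : Fin n => ℝ) j ξ
  have h2 := (Real.hasDerivAt_exp (ξ j)).comp_hasFDerivAt ξ h1
  have h3 := h2.const_mul (c j)
  convert h3 using 1
  · rfl
  · ext z
    rfl
  · rw [smul_smul]

lemma contDiff_gmap (c : Fin n → ℝ) : ContDiff ℝ 1 (gmap c) := by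
  apply contDiff_pi.2
  intro j
  exact contDiff_const.mul (Real.contDiff_exp.comp (contDiff_pi.1 contDiff_id j))

lemma hasStrictFDerivAt_Fmap (W Wt : Matrix (Fin d) (Fin n) ℝ) (c : Fin n → ℝ)
    (x : Fin d → ℝ) :
    HasStrictFDerivAt (Fmap W Wt c)
      ((Amap W).comp ((Dg c (Bmap Wt x)).comp (Bmap Wt))) x := by
  have hder : HasFDerivAt (Fmap W Wt c)
      ((Amap W).comp ((Dg c (Bmap Wt x)).comp (Bmap Wt))) x := by
    rw [Fmap_eq]
    exact ((Amap W).hasFDerivAt.comp _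
      ((hasFDerivAt_gmap c (Bmap Wt x)).comp _ (Bmap Wt).hasFDerivAt))
  have hcont : ContDiff ℝ 1 (Fmap W Wt c) := by
    rw [Fmap_eq]
    exact (Amap W).contDiff.comp ((contDiff_gmap c).comp (Bmap Wt).contDiff)
  exact hcont.contDiffAt.hasStrictFDerivAt' hder one_ne_zero

lemma isOpenMap_Fmap (W Wt : Matrix (Fin d) (Fin n) ℝ) (hWt : Wt.rank = d)
    (hsign : signSet (kerSet W) = signSet (kerSet Wt))
    (c : Fin n → ℝ) (hc : ∀ j, 0 < c j) :
    IsOpenMap (Fmap W Wt c) := by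
  have hequiv : ∀ x : Fin d → ℝ, ∃ e : (Fin d → ℝ) ≃L[ℝ] (Fin d → ℝ),
      (e : (Fin d → ℝ) →L[ℝ] (Fin d → ℝ))
        = (Amap W).comp ((Dg c (Bmap Wt x)).comp (Bmap Wt)) := by
    intro x
    set D := (Amap W).comp ((Dg c (Bmap Wt x)).comp (Bmap Wt)) with hD
    have hinj : Function.Injective D := by
      rw [show (D : (Fin d → ℝ) → (Fin d → ℝ))
        = ((D : (Fin d → ℝ) →ₗ[ℝ] (Fin d → ℝ)) : (Fin d → ℝ) → (Fin d → ℝ)) from rfl]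
      rw [← LinearMap.ker_eq_bot]
      rw [Submodule.eq_bot_iff]
      intro z hz
      have hz0 : D z = 0 := hz
      set u : Fin n → ℝ := fun j =>
        (c j * Real.exp (∑ k, Wt k j * x k)) * (∑ k, Wt k j * z k) with hu_def
      have harg : (Dg c ((Bmap Wt) x)) ((Bmap Wt) z) = u := by
        funext j
        simp only [Dg, ContinuousLinearMap.pi_apply, ContinuousLinearMap.smul_apply,
          ContinuousLinearMap.proj_apply, Bmap, LinearMap.coe_toContinuousLinearMap',
          Matrix.mulVecLin_apply, smul_eq_mul, hu_def]
        simp only [Matrix.mulVec_transpose]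
        rw [show (z ᵥ* Wt) j = ∑ k, Wt k j * z k by simp [Matrix.vecMul, dotProduct, mul_comm],
          show (x ᵥ* Wt) j = ∑ k, Wt k j * x k by simp [Matrix.vecMul, dotProduct, mul_comm]]
      have hu : W.mulVec u = 0 := by
        rw [← harg]
        exact hz0
      have hs : ∀ j, SignType.sign (u j) = SignType.sign (∑ k, Wt k j * z k) := by
        intro j
        exact sign_pos_mul _ _ (mul_pos (hc j) (Real.exp_pos _))
      have hzero := key_sign W Wt hsign u hu z hs
      exact rows_indep Wt hWt z hzero
    have hsurj : Function.Surjective (D : (Fin d → ℝ) →ₗ[ℝ] (Fin d → ℝ)) :=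
      (LinearMap.injective_iff_surjective).mp hinj
    let e := LinearEquiv.ofBijective (D : (Fin d → ℝ) →ₗ[ℝ] (Fin d → ℝ)) ⟨hinj, hsurj⟩
    refine ⟨e.toContinuousLinearEquiv, ?_⟩
    ext z
    rfl
  apply isOpenMap_of_hasStrictFDerivAt_equiv (𝕜 := ℝ)
    (f' := fun x => Classical.choose (hequiv x))
  intro x
  rw [Classical.choose_spec (hequiv x)]
  exact hasStrictFDerivAt_Fmap W Wt c x

end Deriv


/-! ### Cone interior lemmas -/

section Cone

variable {d n : ℕ}

lemma continuous_Fmap (W Wt : Matrix (Fin d) (Fin n) ℝ) (c : Fin n → ℝ) :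
    Continuous (Fmap W Wt c) := by
  rw [Fmap_eq]
  exact (Amap W).continuous.comp ((contDiff_gmap c).continuous.comp (Bmap Wt).continuous)

lemma Fmap_eq_mulVec (W Wt : Matrix (Fin d) (Fin n) ℝ) (c : Fin n → ℝ) (x : Fin d → ℝ) :
    Fmap W Wt c x = W.mulVec (fun j => c j * Real.exp (∑ k, Wt k j * x k)) := by
  funext i
  simp only [Fmap, Matrix.mulVec, dotProduct]
  exact Finset.sum_congr rfl fun j _ => by ring

lemma sum_swap_mulVec (W : Matrix (Fin d) (Fin n) ℝ) (l : Fin d → ℝ) (u : Fin n → ℝ) :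
    ∑ i, l i * (W.mulVec u) i = ∑ j, (Wᵀ.mulVec l) j * u j := by
  have h1 : ∀ i, l i * (W.mulVec u) i = ∑ j, (W i j * u j) * l i := by
    intro i; simp only [Matrix.mulVec, dotProduct, Finset.sum_mul]
    rw [Finset.mul_sum]; exact Finset.sum_congr rfl fun j _ => by ring
  have h2 : ∀ j, (Wᵀ.mulVec l) j * u j = ∑ i, (W i j * u j) * l i := by
    intro j; simp only [Matrix.mulVec, dotProduct, Matrix.transpose_apply, Finset.sum_mul]
    exact Finset.sum_congr rfl fun i _ => by ring
  rw [Finset.sum_congr rfl fun i _ => h1 i, Finset.sum_congr rfl fun j _ => h2 j,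
    Finset.sum_comm]

lemma mem_interior_of_pos (W : Matrix (Fin d) (Fin n) ℝ) (hW : W.rank = d)
    (u : Fin n → ℝ) (hu : ∀ j, 0 < u j) :
    W.mulVec u ∈ interior (coneOf W) := by
  have hopenU : IsOpen {u' : Fin n → ℝ | ∀ j, 0 < u' j} := by
    have : {u' : Fin n → ℝ | ∀ j, 0 < u' j} = ⋂ j, (fun u' : Fin n → ℝ => u' j) ⁻¹' Set.Ioi 0 := by
      ext u'; simp [Set.mem_iInter]
    rw [this]
    exact isOpen_iInter_of_finite fun j => (continuous_apply j).isOpen_preimage _ isOpen_Ioi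
  have hsurj : Function.Surjective (Amap W) := surj_of_rank W hW
  have hopenmap : IsOpenMap (Amap W) := (Amap W).isOpenMap hsurj
  have himg_open : IsOpen ((Amap W) '' {u' : Fin n → ℝ | ∀ j, 0 < u' j}) :=
    hopenmap _ hopenU
  have himg_sub : (Amap W) '' {u' : Fin n → ℝ | ∀ j, 0 < u' j} ⊆ coneOf W := by
    rintro y ⟨u', hu', rfl⟩
    refine ⟨u', fun j => le_of_lt (hu' j), ?_⟩
    funext i
    simp only [Amap, LinearMap.coe_toContinuousLinearMap', Matrix.mulVecLin_apply,
      Matrix.mulVec, dotProduct]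
    exact Finset.sum_congr rfl fun j _ => by ring
  have hmem : W.mulVec u ∈ (Amap W) '' {u' : Fin n → ℝ | ∀ j, 0 < u' j} :=
    ⟨u, hu, rfl⟩
  exact interior_maximal himg_sub himg_open hmem

lemma pos_rep_of_interior (W : Matrix (Fin d) (Fin n) ℝ) (y : Fin d → ℝ)
    (hy : y ∈ interior (coneOf W)) :
    ∃ u : Fin n → ℝ, (∀ j, 0 < u j) ∧ ∀ i, y i = ∑ j, u j * W i j := by
  rw [mem_interior_iff_mem_nhds, Metric.mem_nhds_iff] at hy
  obtain ⟨ε, hε, hball⟩ := hy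
  set s : Fin d → ℝ := W.mulVec (fun _ => 1) with hs_def
  set δ : ℝ := ε / (2 * (‖s‖ + 1)) with hδ_def
  have hsnorm : (0:ℝ) < ‖s‖ + 1 := by positivity
  have hδpos : 0 < δ := by positivity
  have hmem : y - δ • s ∈ coneOf W := by
    apply hball
    rw [Metric.mem_ball, dist_eq_norm]
    have : y - δ • s - y = -(δ • s) := by abel
    rw [this, norm_neg, norm_smul, Real.norm_eq_abs, abs_of_pos hδpos]
    have hδs : δ * (‖s‖ + 1) = ε / 2 := by
      rw [hδ_def]; field_simp
    calc δ * ‖s‖ ≤ δ * (‖s‖ + 1) := by nlinarith [norm_nonneg s]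
    _ = ε / 2 := hδs
    _ < ε := by linarith
  obtain ⟨u', hu', hrep⟩ := hmem
  refine ⟨fun j => u' j + δ, fun j => by have := hu' j; dsimp only; linarith, ?_⟩
  intro i
  have h1 : (y - δ • s) i = ∑ j, u' j * W i j := by rw [hrep]
  have h2 : s i = ∑ j, W i j := by
    simp [hs_def, Matrix.mulVec, dotProduct]
  have h3 : ∑ j, (u' j + δ) * W i j = (∑ j, u' j * W i j) + δ * ∑ j, W i j := by
    rw [Finset.mul_sum, ← Finset.sum_add_distrib]
    exact Finset.sum_congr rfl fun j _ => by ring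
  rw [h3, ← h1, ← h2]
  simp only [Pi.sub_apply, Pi.smul_apply, smul_eq_mul]
  ring

end Cone


/-! ### Properness -/

section Proper

variable {d n : ℕ}

open Filter Topology

lemma properness (W Wt : Matrix (Fin d) (Fin n) ℝ)
    (hW : W.rank = d) (hWt : Wt.rank = d)
    (hsign : signSet (kerSet W) = signSet (kerSet Wt))
    (v : Fin n → ℝ) (hvS : v ∈ orthSet (kerSet W)) (hvpos : ∀ i, 0 < v i)
    (c : Fin n → ℝ) (hc : ∀ j, 0 < c j)
    (y : Fin d → ℝ) (hy : y ∈ interior (coneOf W))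
    (hcl : y ∈ closure (Set.range (Fmap W Wt c))) :
    y ∈ Set.range (Fmap W Wt c) := by
  obtain ⟨l, hl⟩ := v_in_rowspace W hW v (fun u hu => hvS u hu)
  obtain ⟨yk, hyk_mem, hyk_lim⟩ := mem_closure_iff_seq_limit.mp hcl
  choose x hx using hyk_mem
  have hFlim : Tendsto (fun k => Fmap W Wt c (x k)) atTop (𝓝 y) := by
    rw [show (fun k => Fmap W Wt c (x k)) = yk from funext hx]
    exact hyk_lim
  by_cases hbdd : ∃ B, ∃ᶠ k in atTop, ‖x k‖ ≤ B
  · -- bounded case: extract a convergent subsequence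
    obtain ⟨B, hfreq⟩ := hbdd
    obtain ⟨φ, hφ, hφB⟩ := Filter.extraction_of_frequently_atTop hfreq
    have hmem' : ∀ k, x (φ k) ∈ Metric.closedBall (0 : Fin d → ℝ) B := fun k => by
      simpa [Metric.mem_closedBall, dist_zero_right] using hφB k
    obtain ⟨xbar, _, ψ, hψ, hxlim⟩ :=
      (isCompact_closedBall (0 : Fin d → ℝ) B).tendsto_subseq hmem'
    have h1 : Tendsto (fun k => Fmap W Wt c (x (φ (ψ k)))) atTop
        (𝓝 (Fmap W Wt c xbar)) := ((continuous_Fmap W Wt c).tendsto xbar).comp hxlim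
    have h2 : Tendsto (fun k => Fmap W Wt c (x (φ (ψ k)))) atTop (𝓝 y) :=
      hFlim.comp ((hφ.comp hψ).tendsto_atTop)
    exact ⟨xbar, tendsto_nhds_unique h1 h2⟩
  · -- unbounded case: derive a contradiction
    push_neg at hbdd
    have hnorm_top : Tendsto (fun k => ‖x k‖) atTop atTop := by
      rw [Filter.tendsto_atTop]
      intro B
      have hB := hbdd B
      exact hB.mono fun k h => le_of_lt h
    obtain ⟨k0, hk0⟩ := Filter.eventually_atTop.mp (hnorm_top.eventually_ge_atTop 1)
    set x' : ℕ → Fin d → ℝ := fun k => x (k + k0) with hx'_def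
    have hx'norm : ∀ k, 1 ≤ ‖x' k‖ := fun k => hk0 _ (Nat.le_add_left _ _)
    have hx'F : Tendsto (fun k => Fmap W Wt c (x' k)) atTop (𝓝 y) :=
      hFlim.comp (tendsto_add_atTop_nat k0)
    have hx'top : Tendsto (fun k => ‖x' k‖) atTop atTop :=
      hnorm_top.comp (tendsto_add_atTop_nat k0)
    -- normalized directions
    set ebase : ℕ → Fin d → ℝ := fun k => (‖x' k‖)⁻¹ • x' k with hebase_def
    have hsphere : ∀ k, ebase k ∈ Metric.sphere (0 : Fin d → ℝ) 1 := by
      intro k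
      rw [mem_sphere_zero_iff_norm, hebase_def]
      rw [norm_smul, norm_inv, norm_norm]
      exact inv_mul_cancel₀ (by linarith [hx'norm k])
    obtain ⟨e, he_mem, φ1, hφ1, he_lim⟩ :=
      (isCompact_sphere (0 : Fin d → ℝ) 1).tendsto_subseq hsphere
    -- boundedness of the coefficient sequence
    set useq : ℕ → Fin n → ℝ := fun k j => c j * Real.exp (∑ kk, Wt kk j * x' k kk)
      with huseq_def
    have hupos : ∀ k j, 0 < useq k j := fun k j => mul_pos (hc j) (Real.exp_pos _)
    have hFu : ∀ k, Fmap W Wt c (x' k) = W.mulVec (useq k) := fun k =>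
      Fmap_eq_mulVec W Wt c (x' k)
    set a : ℕ → ℝ := fun k => ∑ i, l i * Fmap W Wt c (x' k) i with ha_def
    have ha_lim : Tendsto a atTop (𝓝 (∑ i, l i * y i)) := by
      apply tendsto_finset_sum
      intro i _
      exact ((tendsto_pi_nhds.mp hx'F i)).const_mul (l i)
    obtain ⟨M, hM⟩ := ha_lim.bddAbove_range
    have hMk : ∀ k, a k ≤ M := fun k => hM (Set.mem_range_self k)
    have ha_eq : ∀ k, a k = ∑ j, v j * useq k j := by
      intro k
      rw [ha_def]
      simp only
      rw [Finset.sum_congr rfl fun i _ => by rw [hFu k]]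
      rw [sum_swap_mulVec W l (useq k)]
      exact Finset.sum_congr rfl fun j _ => by rw [hl]
    have hub : ∀ k j, useq k j ≤ M / v j := by
      intro k j
      rw [le_div_iff₀ (hvpos j)]
      have h1 : v j * useq k j ≤ ∑ j', v j' * useq k j' := by
        apply Finset.single_le_sum (f := fun j' => v j' * useq k j')
        · intro j' _
          exact le_of_lt (mul_pos (hvpos j') (hupos k j'))
        · exact Finset.mem_univ j
      calc useq k j * v j = v j * useq k j := by ring
      _ ≤ ∑ j', v j' * useq k j' := h1
      _ = a k := (ha_eq k).symm
      _ ≤ M := hMk k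
    -- extract convergent subsequence of coefficients
    have hbox : ∀ k, useq (φ1 k) ∈ Set.univ.pi (fun j => Set.Icc (0:ℝ) (M / v j)) := by
      intro k
      rw [Set.mem_univ_pi]
      exact fun j => ⟨le_of_lt (hupos _ j), hub _ j⟩
    obtain ⟨ustar, hustar_mem, φ2, hφ2, hu_lim⟩ :=
      (isCompact_univ_pi (fun j => isCompact_Icc)).tendsto_subseq hbox
    -- final composed sequence
    set ρ : ℕ → ℕ := fun k => φ1 (φ2 k) with hρ_def
    have hρmono : StrictMono ρ := hφ1.comp hφ2
    set X : ℕ → Fin d → ℝ := fun k => x' (ρ k) with hX_def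
    have hXnorm : ∀ k, 1 ≤ ‖X k‖ := fun k => hx'norm (ρ k)
    have hXpos : ∀ k, 0 < ‖X k‖ := fun k => lt_of_lt_of_le one_pos (hXnorm k)
    have hXF : Tendsto (fun k => Fmap W Wt c (X k)) atTop (𝓝 y) :=
      hx'F.comp hρmono.tendsto_atTop
    have hXtop : Tendsto (fun k => ‖X k‖) atTop atTop :=
      hx'top.comp hρmono.tendsto_atTop
    set E : ℕ → Fin d → ℝ := fun k => (‖X k‖)⁻¹ • X k with hE_def
    have hE_lim : Tendsto E atTop (𝓝 e) := he_lim.comp hφ2.tendsto_atTop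
    set U : ℕ → Fin n → ℝ := fun k => useq (ρ k) with hU_def
    have hU_lim : Tendsto U atTop (𝓝 ustar) := hu_lim
    -- the limiting direction functional
    set p : Fin n → ℝ := fun j => ∑ kk, Wt kk j * e kk with hp_def
    have hwtE : ∀ j, Tendsto (fun k => ∑ kk, Wt kk j * E k kk) atTop (𝓝 (p j)) := by
      intro j
      apply tendsto_finset_sum
      intro kk _
      exact (tendsto_pi_nhds.mp hE_lim kk).const_mul (Wt kk j)
    have hfactor : ∀ k j, ∑ kk, Wt kk j * X k kk = ‖X k‖ * ∑ kk, Wt kk j * E k kk := by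
      intro k j
      rw [Finset.mul_sum]
      apply Finset.sum_congr rfl
      intro kk _
      rw [hE_def]
      simp only [Pi.smul_apply, smul_eq_mul]
      rw [show ‖X k‖ * (Wt kk j * (‖X k‖⁻¹ * X k kk))
          = (‖X k‖ * ‖X k‖⁻¹) * (Wt kk j * X k kk) from by ring,
        mul_inv_cancel₀ (ne_of_gt (hXpos k)), one_mul]
    have hMvpos : ∀ j, 0 < M / v j := fun j => lt_of_lt_of_le (hupos 0 j) (hub 0 j)
    set K : Fin n → ℝ := fun j => Real.log ((M / v j) / c j) with hK_def
    have hwtX_le : ∀ k j, ∑ kk, Wt kk j * X k kk ≤ K j := by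
      intro k j
      rw [hK_def]
      simp only
      rw [Real.le_log_iff_exp_le (div_pos (hMvpos j) (hc j))]
      rw [le_div_iff₀ (hc j)]
      calc Real.exp (∑ kk, Wt kk j * X k kk) * c j
          = c j * Real.exp (∑ kk, Wt kk j * X k kk) := by ring
      _ = useq (ρ k) j := rfl
      _ ≤ M / v j := hub _ j
    have hp_nonpos : ∀ j, p j ≤ 0 := by
      intro j
      have hg_lim : Tendsto (fun k => K j * (‖X k‖)⁻¹) atTop (𝓝 0) := by
        have := (tendsto_inv_atTop_zero.comp hXtop).const_mul (K j)
        simpa using this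
      refine le_of_tendsto_of_tendsto' (hwtE j) hg_lim ?_
      intro k
      have h1 : ∑ kk, Wt kk j * E k kk = (‖X k‖)⁻¹ * ∑ kk, Wt kk j * X k kk := by
        rw [hfactor k j, ← mul_assoc, inv_mul_cancel₀ (ne_of_gt (hXpos k)), one_mul]
      rw [h1, mul_comm (K j) _]
      exact mul_le_mul_of_nonneg_left (hwtX_le k j) (le_of_lt (inv_pos.mpr (hXpos k)))
    have hzero_of_neg : ∀ j, p j < 0 → ustar j = 0 := by
      intro j hpj
      have hhalf : p j < p j / 2 := by linarith
      have hev : ∀ᶠ k in atTop, (∑ kk, Wt kk j * E k kk) < p j / 2 :=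
        (hwtE j).eventually_lt_const hhalf
      have hSle : ∀ᶠ k in atTop,
          (∑ kk, Wt kk j * X k kk) ≤ ‖X k‖ * (p j / 2) := by
        apply hev.mono
        intro k hk
        rw [hfactor k j]
        exact mul_le_mul_of_nonneg_left (le_of_lt hk) (norm_nonneg _)
      have hg_bot : Tendsto (fun k => ‖X k‖ * (p j / 2)) atTop atBot := by
        have h2 := hXtop.atTop_mul_const_of_neg (by linarith : p j / 2 < 0)
        exact h2
      have hS_bot : Tendsto (fun k => ∑ kk, Wt kk j * X k kk) atTop atBot :=
        tendsto_atBot_mono' atTop hSle hg_bot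
      have hexp0 : Tendsto (fun k => Real.exp (∑ kk, Wt kk j * X k kk)) atTop (𝓝 0) :=
        Real.tendsto_exp_atBot.comp hS_bot
      have hUj0 : Tendsto (fun k => U k j) atTop (𝓝 0) := by
        have := hexp0.const_mul (c j)
        simpa using this
      have hUj : Tendsto (fun k => U k j) atTop (𝓝 (ustar j)) :=
        tendsto_pi_nhds.mp hU_lim j
      exact tendsto_nhds_unique hUj hUj0
    have hWu : W.mulVec ustar = y := by
      funext i
      have h1 : Tendsto (fun k => Fmap W Wt c (X k) i) atTop (𝓝 (y i)) :=
        tendsto_pi_nhds.mp hXF i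
      have h2 : Tendsto (fun k => Fmap W Wt c (X k) i) atTop (𝓝 ((W.mulVec ustar) i)) := by
        have heq : ∀ k, Fmap W Wt c (X k) i = ∑ j, W i j * U k j := by
          intro k
          rw [hFu (ρ k)]
          simp [Matrix.mulVec, dotProduct]
          rfl
        rw [show (fun k => Fmap W Wt c (X k) i) = fun k => ∑ j, W i j * U k j from
          funext heq]
        have h3 : (W.mulVec ustar) i = ∑ j, W i j * ustar j := by
          simp [Matrix.mulVec, dotProduct]
        rw [h3]
        apply tendsto_finset_sum
        intro j _
        exact (tendsto_pi_nhds.mp hU_lim j).const_mul (W i j)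
      exact tendsto_nhds_unique h2 h1
    obtain ⟨ubar, hubar_pos, hubar_rep⟩ := pos_rep_of_interior W y hy
    set z : Fin n → ℝ := fun j => ustar j - ubar j with hz_def
    have hzker : z ∈ kerSet W := by
      show W.mulVec z = 0
      funext i
      have h1 : (W.mulVec z) i = (W.mulVec ustar) i - ∑ j, ubar j * W i j := by
        simp only [Matrix.mulVec, dotProduct, hz_def, ← Finset.sum_sub_distrib]
        exact Finset.sum_congr rfl fun j _ => by ring
      rw [h1, hWu, ← hubar_rep i]
      simp
    have hmem2 : signVec z ∈ signSet (kerSet W) := ⟨z, hzker, rfl⟩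
    rw [hsign] at hmem2
    obtain ⟨zt, hztk, hsz⟩ := hmem2
    have hdot : ∑ j, zt j * p j = 0 := by
      have := dot_kerWt_rowWt Wt zt hztk e
      rw [hp_def]
      exact this
    have hterms_nonneg : ∀ j ∈ Finset.univ, (0:ℝ) ≤ zt j * p j := by
      intro j _
      rcases lt_or_eq_of_le (hp_nonpos j) with hpj | hpj
      · have hu0 : ustar j = 0 := hzero_of_neg j hpj
        have hzj : z j < 0 := by rw [hz_def]; simp [hu0]; exact hubar_pos j
        have hsgn : SignType.sign (zt j) = -1 := by
          have := congrFun hsz j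
          simp only [signVec] at this
          rw [this, sign_neg hzj]
        have hztj : zt j < 0 := sign_eq_neg_one_iff.mp hsgn
        exact le_of_lt (mul_pos_of_neg_of_neg hztj hpj)
      · rw [hpj, mul_zero]
    have hall0 := (Finset.sum_eq_zero_iff_of_nonneg hterms_nonneg).mp hdot
    have hp0 : ∀ j, p j = 0 := by
      intro j
      rcases lt_or_eq_of_le (hp_nonpos j) with hpj | hpj
      · exfalso
        have hu0 : ustar j = 0 := hzero_of_neg j hpj
        have hzj : z j < 0 := by rw [hz_def]; simp [hu0]; exact hubar_pos j
        have hsgn : SignType.sign (zt j) = -1 := by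
          have := congrFun hsz j
          simp only [signVec] at this
          rw [this, sign_neg hzj]
        have hztj : zt j < 0 := sign_eq_neg_one_iff.mp hsgn
        have := hall0 j (Finset.mem_univ j)
        nlinarith
      · exact hpj
    have he0 : e = 0 := rows_indep Wt hWt e (by intro j; exact hp0 j)
    exfalso
    rw [mem_sphere_zero_iff_norm] at he_mem
    rw [he0] at he_mem
    simp at he_mem

end Proper


lemma convex_coneOf {d n : ℕ} (W : Matrix (Fin d) (Fin n) ℝ) : Convex ℝ (coneOf W) := by
  rintro y1 ⟨u1, hu1, rfl⟩ y2 ⟨u2, hu2, rfl⟩ a b ha hb hab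
  refine ⟨fun j => a * u1 j + b * u2 j,
    fun j => add_nonneg (mul_nonneg ha (hu1 j)) (mul_nonneg hb (hu2 j)), ?_⟩
  funext i
  simp only [Pi.add_apply, Pi.smul_apply, smul_eq_mul]
  rw [Finset.mul_sum, Finset.mul_sum, ← Finset.sum_add_distrib]
  exact Finset.sum_congr rfl fun j _ => by ring

/-- if `sign(S) = sign(S̃)` and there is a strictly positive vector in `S⊥`,
then `F_c` is a bijection from `ℝ^d` onto the interior of `C = cone W`, for all `c > 0`. -/
theorem stmt5 {d n : ℕ} (hd : 1 ≤ d) (hdn : d ≤ n)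
    (W Wt : Matrix (Fin d) (Fin n) ℝ) (hW : W.rank = d) (hWt : Wt.rank = d)
    (hsign : signSet (kerSet W) = signSet (kerSet Wt))
    (hv : ∃ v ∈ orthSet (kerSet W), ∀ i, 0 < v i) :
    ∀ c : Fin n → ℝ, (∀ j, 0 < c j) →
      Function.Injective (Fmap W Wt c) ∧
      Set.range (Fmap W Wt c) = interior (coneOf W) := by
  intro c hc
  obtain ⟨v, hvS, hvpos⟩ := hv
  refine ⟨Fmap_injective W Wt hWt hsign c hc, ?_⟩
  have hopen : IsOpenMap (Fmap W Wt c) := isOpenMap_Fmap W Wt hWt hsign c hc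
  have hrange_open : IsOpen (Set.range (Fmap W Wt c)) := hopen.isOpen_range
  have hsub : Set.range (Fmap W Wt c) ⊆ interior (coneOf W) := by
    rintro _ ⟨x, rfl⟩
    rw [Fmap_eq_mulVec]
    exact mem_interior_of_pos W hW _ (fun j => mul_pos (hc j) (Real.exp_pos _))
  apply Set.Subset.antisymm hsub
  -- interior ⊆ range
  have hTconn : IsPreconnected (interior (coneOf W)) :=
    ((convex_coneOf W).interior).isPreconnected
  have hvcomp : IsOpen (closure (Set.range (Fmap W Wt c)))ᶜ :=
    isClosed_closure.isOpen_compl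
  have hdisj : Disjoint (Set.range (Fmap W Wt c)) (closure (Set.range (Fmap W Wt c)))ᶜ := by
    rw [Set.disjoint_left]
    intro t ht hcompl
    exact hcompl (subset_closure ht)
  have hcover : interior (coneOf W)
      ⊆ Set.range (Fmap W Wt c) ∪ (closure (Set.range (Fmap W Wt c)))ᶜ := by
    intro t ht
    by_cases hcl : t ∈ closure (Set.range (Fmap W Wt c))
    · exact Or.inl (properness W Wt hW hWt hsign v hvS hvpos c hc t ht hcl)
    · exact Or.inr hcl
  have hne : (interior (coneOf W) ∩ Set.range (Fmap W Wt c)).Nonempty :=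
    ⟨Fmap W Wt c 0, hsub ⟨0, rfl⟩, ⟨0, rfl⟩⟩
  exact hTconn.subset_left_of_subset_union hrange_open hvcomp hdisj hcover hne
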